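/- arXiv:0810.2924 — 3 statements merged into one kernel-verified Lean document; each statement's English description precedes it below -/
import Mathlib

section
/- For every real x ≥ 0, Q(x) = (1/π) ∫₀^{π/2} exp(−x²/(2 sin²θ)) dθ, where Q(x) = (1/√(2π)) ∫ₓ^∞ e^{−t²/2} dt is the Gaussian tail function. -/
open MeasureTheory Real

open Set

lemma gauss_half : ∫ t in Ioi (0:ℝ), Real.exp (-t ^ 2 / 2) = Real.sqrt (2 * Real.pi) / 2 := by
  have h := integral_gaussian_Ioi (1/2)
  have : (fun t : ℝ => Real.exp (-t ^ 2 / 2)) = fun t : ℝ => Real.exp (-(1/2) * t ^ 2) := by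
    funext t; ring_nf
  rw [this, h]
  rw [show Real.pi / (1/2) = 2 * Real.pi by ring]

lemma thetaIntegral (s : ℝ) (hs : 0 < s) :
    ∫ θ in Ioo (0:ℝ) (Real.pi/2),
        (s / Real.sin θ ^ 2) * Real.exp (-s ^ 2 / (2 * Real.sin θ ^ 2)) =
      Real.sqrt (2 * Real.pi) / 2 * Real.exp (-s ^ 2 / 2) := by
  set A : Set ℝ := Ioo (0:ℝ) (Real.pi/2) with hAdef
  have hA : MeasurableSet A := measurableSet_Ioo
  have hsin : ∀ θ ∈ A, 0 < Real.sin θ := fun θ hθ =>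
    Real.sin_pos_of_pos_of_lt_pi hθ.1 (lt_trans hθ.2 (by linarith [Real.pi_pos]))
  have hcos : ∀ θ ∈ A, 0 < Real.cos θ := fun θ hθ =>
    Real.cos_pos_of_mem_Ioo ⟨by linarith [hθ.1, Real.pi_pos], hθ.2⟩
  set g : ℝ → ℝ := fun θ => s * (Real.cos θ / Real.sin θ) with hgdef
  have hderiv : ∀ θ ∈ A, HasDerivWithinAt g (-(s / Real.sin θ ^ 2)) A θ := by
    intro θ hθ
    have hsθ := (hsin θ hθ).ne'
    have h1 : HasDerivAt (fun θ => Real.cos θ / Real.sin θ)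
        ((-Real.sin θ * Real.sin θ - Real.cos θ * Real.cos θ) / Real.sin θ ^ 2) θ :=
      (Real.hasDerivAt_cos θ).div (Real.hasDerivAt_sin θ) hsθ
    have h2 := h1.const_mul s
    have h3 : s * ((-Real.sin θ * Real.sin θ - Real.cos θ * Real.cos θ) / Real.sin θ ^ 2)
        = -(s / Real.sin θ ^ 2) := by
      have hpyth := Real.sin_sq_add_cos_sq θ
      field_simp
      nlinarith [hpyth]
    rw [h3] at h2
    exact h2.hasDerivWithinAt
  have hinj : InjOn g A := by
    have hanti : StrictAntiOn g A := by
      intro a ha b hb hab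
      have h1 : Real.cos b / Real.sin b < Real.cos b / Real.sin a :=
        div_lt_div_of_pos_left (hcos b hb) (hsin a ha)
          (Real.strictMonoOn_sin.lt_iff_lt
            (by constructor <;> [linarith [ha.1, Real.pi_pos]; linarith [ha.2]])
            (by constructor <;> [linarith [hb.1, Real.pi_pos]; linarith [hb.2]]) |>.mpr hab)
      have hca : Real.cos b < Real.cos a :=
        Real.strictAntiOn_cos
          (by constructor <;> [linarith [ha.1]; linarith [ha.2, Real.pi_pos]])
          (by constructor <;> [linarith [hb.1]; linarith [hb.2, Real.pi_pos]]) hab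
      have h2 : Real.cos b / Real.sin a < Real.cos a / Real.sin a :=
        (div_lt_div_iff_of_pos_right (hsin a ha)).mpr hca
      have : Real.cos b / Real.sin b < Real.cos a / Real.sin a := lt_trans h1 h2
      exact mul_lt_mul_of_pos_left this hs
    exact hanti.injOn
  have himg : g '' A = Ioi (0:ℝ) := by
    apply Subset.antisymm
    · rintro t ⟨θ, hθ, rfl⟩
      exact mul_pos hs (div_pos (hcos θ hθ) (hsin θ hθ))
    · intro t ht
      have ht' : (0:ℝ) < t := ht
      have hy : (0:ℝ) < s / t := div_pos hs ht'
      have hpos : 0 < Real.arctan (s / t) := by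
        rw [← Real.arctan_zero]; exact Real.arctan_strictMono hy
      refine ⟨Real.arctan (s / t), ⟨hpos, Real.arctan_lt_pi_div_two _⟩, ?_⟩
      have hsq : (0:ℝ) < Real.sqrt (1 + (s/t) ^ 2) :=
        Real.sqrt_pos.mpr (by positivity)
      rw [hgdef]
      simp only [Real.cos_arctan, Real.sin_arctan]
      field_simp
  have key := integral_image_eq_integral_abs_deriv_smul hA hderiv hinj
      (fun t => Real.exp (-(s ^ 2 + t ^ 2) / 2))
  rw [himg] at key
  have hL : ∫ t in Ioi (0:ℝ), Real.exp (-(s ^ 2 + t ^ 2) / 2)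
      = Real.exp (-s ^ 2 / 2) * ∫ t in Ioi (0:ℝ), Real.exp (-t ^ 2 / 2) := by
    rw [← integral_const_mul]
    congr 1; funext t
    rw [← Real.exp_add]; ring_nf
  have hGauss : ∫ t in Ioi (0:ℝ), Real.exp (-t ^ 2 / 2) = Real.sqrt (2 * Real.pi) / 2 := by
    have h := integral_gaussian_Ioi (1/2)
    have heq : (fun t : ℝ => Real.exp (-t ^ 2 / 2)) = fun t : ℝ => Real.exp (-(1/2) * t ^ 2) := by
      funext t; ring_nf
    rw [heq, h, show Real.pi / (1/2) = 2 * Real.pi by ring]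
  have hR : ∫ θ in A, |(-(s / Real.sin θ ^ 2))| • Real.exp (-(s ^ 2 + g θ ^ 2) / 2)
      = ∫ θ in A, (s / Real.sin θ ^ 2) * Real.exp (-s ^ 2 / (2 * Real.sin θ ^ 2)) := by
    apply setIntegral_congr_fun hA
    intro θ hθ
    have h1 : |(-(s / Real.sin θ ^ 2))| = s / Real.sin θ ^ 2 := by
      rw [abs_neg, abs_of_pos (div_pos hs (pow_pos (hsin θ hθ) 2))]
    have hsθ := (hsin θ hθ).ne'
    have hpyth := Real.sin_sq_add_cos_sq θ
    have h3 : s ^ 2 + g θ ^ 2 = s ^ 2 / Real.sin θ ^ 2 := by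
      rw [hgdef]
      field_simp
      nlinarith [hpyth]
    have h2 : -(s ^ 2 + g θ ^ 2) / 2 = -s ^ 2 / (2 * Real.sin θ ^ 2) := by
      rw [h3]; field_simp
    dsimp only
    rw [h1, h2, smul_eq_mul]
  rw [hL, hGauss] at key
  rw [hR] at key
  rw [← key]; ring
lemma sIntegral (k : ℝ) (hk : 0 < k) (x : ℝ) (hx : 0 ≤ x) :
    ∫ s in Ioc (0:ℝ) x, (s / k) * Real.exp (-s ^ 2 / (2 * k)) =
      1 - Real.exp (-x ^ 2 / (2 * k)) := by
  have hF : ∀ s : ℝ, HasDerivAt (fun s : ℝ => -Real.exp (-s ^ 2 / (2 * k)))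
      ((s / k) * Real.exp (-s ^ 2 / (2 * k))) s := by
    intro s
    have hu : HasDerivAt (fun s : ℝ => -s ^ 2 / (2 * k)) (-(s / k)) s := by
      have := ((hasDerivAt_pow 2 s).neg).div_const (2 * k)
      refine this.congr_deriv ?_
      field_simp
      ring
    have := (hu.exp).neg
    refine this.congr_deriv ?_
    ring
  have hcont : Continuous (fun s : ℝ => (s / k) * Real.exp (-s ^ 2 / (2 * k))) := by
    continuity
  have := intervalIntegral.integral_eq_sub_of_hasDerivAt (f := fun s : ℝ => -Real.exp (-s ^ 2 / (2 * k)))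
      (fun s _ => hF s) (hcont.intervalIntegrable 0 x)
  rw [intervalIntegral.integral_of_le hx] at this
  rw [this]
  norm_num
  ring

/-- Craig's formula: for `x ≥ 0`, the Gaussian tail function
`Q(x) = (1/√(2π)) ∫ₓ^∞ e^{−t²/2} dt` satisfies
`Q(x) = (1/π) ∫₀^{π/2} exp(−x²/(2 sin²θ)) dθ`. -/
theorem craig_formula_Q_function (x : ℝ) (hx : 0 ≤ x) :
    (1 / Real.sqrt (2 * Real.pi)) * ∫ t in Set.Ioi x, Real.exp (-t ^ 2 / 2) =
      (1 / Real.pi) * ∫ θ in (0 : ℝ)..(Real.pi / 2),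
        Real.exp (-x ^ 2 / (2 * Real.sin θ ^ 2)) := by
  have hπ := Real.pi_pos
  set A : Set ℝ := Ioo (0:ℝ) (Real.pi/2) with hAdef
  set B : Set ℝ := Ioc (0:ℝ) x with hBdef
  set f : ℝ → ℝ → ℝ := fun θ s =>
    (s / Real.sin θ ^ 2) * Real.exp (-s ^ 2 / (2 * Real.sin θ ^ 2)) with hfdef
  have hA : MeasurableSet A := measurableSet_Ioo
  have hB : MeasurableSet B := measurableSet_Ioc
  have hsin : ∀ θ ∈ A, 0 < Real.sin θ := fun θ hθ =>
    Real.sin_pos_of_pos_of_lt_pi hθ.1 (lt_trans hθ.2 (by linarith))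
  have hAfin : volume A ≠ ⊤ := by
    rw [hAdef, Real.volume_Ioo]; exact ENNReal.ofReal_ne_top
  -- measurability
  have hmeas : AEStronglyMeasurable (Function.uncurry f)
      ((volume.restrict A).prod (volume.restrict B)) := by
    apply Measurable.aestronglyMeasurable
    apply Measurable.mul
    · exact (measurable_snd.div ((Real.measurable_sin.comp measurable_fst).pow_const 2))
    · exact (((measurable_snd.pow_const 2).neg).div
        (((Real.measurable_sin.comp measurable_fst).pow_const 2).const_mul 2)).exp
  -- inner s-integral
  have hinner : ∀ θ ∈ A, ∫ s in B, f θ s = 1 - Real.exp (-x ^ 2 / (2 * Real.sin θ ^ 2)) :=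
    fun θ hθ => sIntegral _ (pow_pos (hsin θ hθ) 2) x hx
  have hintB : ∀ θ ∈ A, IntegrableOn (f θ) B := by
    intro θ hθ
    have hc : Continuous (f θ) := by
      apply Continuous.mul
      · exact continuous_id.div_const _
      · exact (((continuous_pow 2).neg).div_const _).rexp
    exact hc.integrableOn_Ioc
  have hnorm : ∀ θ ∈ A, (∫ s in B, ‖f θ s‖) = 1 - Real.exp (-x ^ 2 / (2 * Real.sin θ ^ 2)) := by
    intro θ hθ
    rw [← hinner θ hθ]
    apply setIntegral_congr_fun hB
    intro s hs
    exact Real.norm_of_nonneg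
      (mul_nonneg (div_nonneg hs.1.le (sq_nonneg _)) (Real.exp_nonneg _))
  have hbound : ∀ θ ∈ A, 0 ≤ 1 - Real.exp (-x ^ 2 / (2 * Real.sin θ ^ 2)) ∧
      1 - Real.exp (-x ^ 2 / (2 * Real.sin θ ^ 2)) ≤ 1 := by
    intro θ hθ
    constructor
    · have : Real.exp (-x ^ 2 / (2 * Real.sin θ ^ 2)) ≤ 1 := by
        rw [Real.exp_le_one_iff]
        apply div_nonpos_of_nonpos_of_nonneg (neg_nonpos.mpr (sq_nonneg x))
        positivity
      linarith
    · linarith [Real.exp_nonneg (-x ^ 2 / (2 * Real.sin θ ^ 2))]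
  have hone : Integrable (fun _ : ℝ => (1:ℝ)) (volume.restrict A) :=
    integrableOn_const hAfin
  have hInt2 : Integrable (fun θ => ∫ s in B, ‖f θ s‖) (volume.restrict A) := by
    apply hone.mono' (hmeas.norm.integral_prod_right')
    filter_upwards [ae_restrict_mem hA] with θ hθ
    rw [show (∫ s in B, ‖Function.uncurry f (θ, s)‖) = ∫ s in B, ‖f θ s‖ from rfl,
      hnorm θ hθ, Real.norm_of_nonneg (hbound θ hθ).1]
    exact (hbound θ hθ).2
  have hprod : Integrable (Function.uncurry f)
      ((volume.restrict A).prod (volume.restrict B)) := by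
    rw [integrable_prod_iff hmeas]
    constructor
    · filter_upwards [ae_restrict_mem hA] with θ hθ
      exact hintB θ hθ
    · exact hInt2
  have hswap := MeasureTheory.integral_integral_swap (f := f) hprod
  -- compute the swapped side
  have hright : (∫ s in B, ∫ θ in A, f θ s) =
      Real.sqrt (2 * Real.pi) / 2 * ∫ s in B, Real.exp (-s ^ 2 / 2) := by
    rw [← integral_const_mul]
    apply setIntegral_congr_fun hB
    intro s hs
    exact thetaIntegral s hs.1
  -- the θ integral of the inner integral
  have hleft : (∫ θ in A, ∫ s in B, f θ s) =
      ∫ θ in A, (1 - Real.exp (-x ^ 2 / (2 * Real.sin θ ^ 2))) := by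
    apply setIntegral_congr_fun hA
    intro θ hθ
    exact hinner θ hθ
  have hexpmeas : AEStronglyMeasurable
      (fun θ : ℝ => Real.exp (-x ^ 2 / (2 * Real.sin θ ^ 2))) (volume.restrict A) := by
    apply Measurable.aestronglyMeasurable
    exact ((measurable_const.div ((Real.measurable_sin.pow_const 2).const_mul 2))).exp
  have hexpint : Integrable (fun θ : ℝ => Real.exp (-x ^ 2 / (2 * Real.sin θ ^ 2)))
      (volume.restrict A) := by
    apply hone.mono' hexpmeas
    filter_upwards [ae_restrict_mem hA] with θ hθ
    rw [Real.norm_of_nonneg (Real.exp_nonneg _)]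
    linarith [(hbound θ hθ).1]
  have hvol : (∫ _ in A, (1:ℝ)) = Real.pi / 2 := by
    simp [hAdef, Real.volume_Ioo]
    linarith
  have hsub : (∫ θ in A, (1 - Real.exp (-x ^ 2 / (2 * Real.sin θ ^ 2)))) =
      Real.pi / 2 - ∫ θ in A, Real.exp (-x ^ 2 / (2 * Real.sin θ ^ 2)) := by
    rw [integral_sub hone hexpint, hvol]
  -- combine: E = π/2 - √(2π)/2 * I
  set E : ℝ := ∫ θ in A, Real.exp (-x ^ 2 / (2 * Real.sin θ ^ 2)) with hEdef
  set I : ℝ := ∫ s in B, Real.exp (-s ^ 2 / 2) with hIdef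
  have hkey : E = Real.pi / 2 - Real.sqrt (2 * Real.pi) / 2 * I := by
    have := hleft.symm.trans (hswap.trans hright)
    rw [hsub] at this
    linarith
  -- rewrite goal RHS
  have hRHS : (∫ θ in (0:ℝ)..(Real.pi/2), Real.exp (-x ^ 2 / (2 * Real.sin θ ^ 2))) = E := by
    rw [intervalIntegral.integral_of_le (by positivity), integral_Ioc_eq_integral_Ioo]
  -- rewrite goal LHS
  have hgauss : IntegrableOn (fun t : ℝ => Real.exp (-t ^ 2 / 2)) (Ioi 0) := by
    have h := integrable_exp_neg_mul_sq (b := (1/2 : ℝ)) (by norm_num)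
    have heq : (fun t : ℝ => Real.exp (-t ^ 2 / 2)) = fun t : ℝ => Real.exp (-(1/2) * t ^ 2) := by
      funext t; ring_nf
    rw [heq]
    exact h.integrableOn
  have hsplit : (∫ t in Ioi (0:ℝ), Real.exp (-t ^ 2 / 2)) =
      I + ∫ t in Ioi x, Real.exp (-t ^ 2 / 2) := by
    rw [← Ioc_union_Ioi_eq_Ioi hx]
    rw [setIntegral_union (Ioc_disjoint_Ioi le_rfl) measurableSet_Ioi
      (hgauss.mono_set (by intro t ht; exact ht.1))
      (hgauss.mono_set (fun t ht => lt_of_le_of_lt hx ht))]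
  have hLHS : (∫ t in Ioi x, Real.exp (-t ^ 2 / 2)) = Real.sqrt (2 * Real.pi) / 2 - I := by
    have := gauss_half
    rw [hsplit] at this
    linarith
  rw [hLHS, hRHS, hkey]
  have hs2 : Real.sqrt (2 * Real.pi) ^ 2 = 2 * Real.pi := Real.sq_sqrt (by positivity)
  have hspos : 0 < Real.sqrt (2 * Real.pi) := Real.sqrt_pos.mpr (by positivity)
  have hs2' : Real.sqrt 2 * Real.sqrt Real.pi * (Real.sqrt 2 * Real.sqrt Real.pi) = 2 * Real.pi := by
    rw [Real.sqrt_mul (by norm_num : (0:ℝ) ≤ 2)] at hs2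
    nlinarith [hs2]
  field_simp
  linear_combination I * hs2
end

section
/- Fix t > 0, an N×N nonnegative diagonal matrix D with D ≠ 0 and a K×K nonnegative diagonal matrix D̃ with D̃ ≠ 0. Then the system δ = (1/K) Tr[D (I + t δ̃ D)⁻¹], δ̃ = (1/K) Tr[D̃ (I + t δ D̃)⁻¹] admits a unique solution (δ, δ̃) with δ > 0 and δ̃ > 0. -/
open Finset

private lemma fps_denom_pos {t x c : ℝ} (ht : 0 < t) (hx : 0 ≤ x) (hc : 0 ≤ c) :
    0 < 1 + t * x * c := by positivity

private lemma fps_sum_pos {K n : ℕ} (hK : 0 < K) {t : ℝ} (ht : 0 < t) {c : Fin n → ℝ}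
    (hc : ∀ i, 0 ≤ c i) (hc0 : ∃ i, 0 < c i) {x : ℝ} (hx : 0 ≤ x) :
    0 < (1 / (K : ℝ)) * ∑ i, c i / (1 + t * x * c i) := by
  have hKr : (0:ℝ) < (K:ℝ) := by exact_mod_cast hK
  have hs : 0 < ∑ i, c i / (1 + t * x * c i) := by
    obtain ⟨i0, hi0⟩ := hc0
    refine Finset.sum_pos' (fun i _ => ?_) ⟨i0, Finset.mem_univ _, ?_⟩
    · exact div_nonneg (hc i) (le_of_lt (fps_denom_pos ht hx (hc i)))
    · exact div_pos hi0 (fps_denom_pos ht hx (hc i0))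
  positivity

private lemma fps_sum_nonneg {K n : ℕ} {t : ℝ} (ht : 0 < t) {c : Fin n → ℝ}
    (hc : ∀ i, 0 ≤ c i) {x : ℝ} (hx : 0 ≤ x) :
    0 ≤ (1 / (K : ℝ)) * ∑ i, c i / (1 + t * x * c i) := by
  have : 0 ≤ ∑ i, c i / (1 + t * x * c i) :=
    Finset.sum_nonneg fun i _ => div_nonneg (hc i) (le_of_lt (fps_denom_pos ht hx (hc i)))
  positivity

private lemma fps_sum_le {K n : ℕ} {t : ℝ} (ht : 0 < t) {c : Fin n → ℝ}
    (hc : ∀ i, 0 ≤ c i) {x : ℝ} (hx : 0 ≤ x) :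
    (1 / (K : ℝ)) * ∑ i, c i / (1 + t * x * c i) ≤ (1 / (K : ℝ)) * ∑ i, c i := by
  have hKr : (0:ℝ) ≤ 1 / (K : ℝ) := by positivity
  refine mul_le_mul_of_nonneg_left (Finset.sum_le_sum fun i _ => ?_) hKr
  have h1 : (1:ℝ) ≤ 1 + t * x * c i := by nlinarith [mul_nonneg (mul_nonneg ht.le hx) (hc i)]
  exact div_le_self (hc i) h1

private lemma fps_cont {K n : ℕ} {t : ℝ} (ht : 0 < t) {c : Fin n → ℝ}
    (hc : ∀ i, 0 ≤ c i) :
    ContinuousOn (fun x : ℝ => (1 / (K : ℝ)) * ∑ i, c i / (1 + t * x * c i)) (Set.Ici 0) := by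
  apply ContinuousOn.mul continuousOn_const
  apply continuousOn_finset_sum
  intro i _
  apply ContinuousOn.div continuousOn_const
  · fun_prop
  · intro x hx
    exact ne_of_gt (fps_denom_pos ht hx (hc i))

set_option maxHeartbeats 1000000 in
private lemma fps_uniq {N K : ℕ} (hK : 0 < K) {t : ℝ} (ht : 0 < t)
    {d : Fin N → ℝ} {dt : Fin K → ℝ} (hd : ∀ i, 0 ≤ d i) (hdt : ∀ j, 0 ≤ dt j)
    (hd0 : ∃ i, 0 < d i) (hdt0 : ∃ j, 0 < dt j)
    {a b a' b' : ℝ} (ha : 0 < a) (hb : 0 < b) (ha' : 0 < a') (hb' : 0 < b')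
    (e1 : a = (1 / (K : ℝ)) * ∑ i, d i / (1 + t * b * d i))
    (e2 : b = (1 / (K : ℝ)) * ∑ j, dt j / (1 + t * a * dt j))
    (e1' : a' = (1 / (K : ℝ)) * ∑ i, d i / (1 + t * b' * d i))
    (e2' : b' = (1 / (K : ℝ)) * ∑ j, dt j / (1 + t * a' * dt j)) :
    a = a' ∧ b = b' := by
  have hKr : (0:ℝ) < (K:ℝ) := by exact_mod_cast hK
  obtain ⟨A, hA_def⟩ : ∃ A : ℝ, A = (1 / (K : ℝ)) * ∑ i, (d i)^2 / ((1 + t * b * d i) * (1 + t * b' * d i)) := ⟨_, rfl⟩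
  obtain ⟨B, hB_def⟩ : ∃ B : ℝ, B = (1 / (K : ℝ)) * ∑ j, (dt j)^2 / ((1 + t * a * dt j) * (1 + t * a' * dt j)) := ⟨_, rfl⟩
  -- difference identities
  have key1 : ∀ i : Fin N, d i / (1 + t * b * d i) - d i / (1 + t * b' * d i)
      = t * (b' - b) * ((d i)^2 / ((1 + t * b * d i) * (1 + t * b' * d i))) := by
    intro i
    have hx : (1 + t * b * d i) ≠ 0 := ne_of_gt (fps_denom_pos ht hb.le (hd i))
    have hy : (1 + t * b' * d i) ≠ 0 := ne_of_gt (fps_denom_pos ht hb'.le (hd i))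
    rw [div_sub_div _ _ hx hy, mul_div_assoc']
    congr 1
    ring
  have key2 : ∀ j : Fin K, dt j / (1 + t * a * dt j) - dt j / (1 + t * a' * dt j)
      = t * (a' - a) * ((dt j)^2 / ((1 + t * a * dt j) * (1 + t * a' * dt j))) := by
    intro j
    have hx : (1 + t * a * dt j) ≠ 0 := ne_of_gt (fps_denom_pos ht ha.le (hdt j))
    have hy : (1 + t * a' * dt j) ≠ 0 := ne_of_gt (fps_denom_pos ht ha'.le (hdt j))
    rw [div_sub_div _ _ hx hy, mul_div_assoc']
    congr 1
    ring
  have h1 : a - a' = t * (b' - b) * A := by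
    have : a - a' = (1 / (K : ℝ)) * ∑ i, (d i / (1 + t * b * d i) - d i / (1 + t * b' * d i)) := by
      rw [e1, e1', Finset.sum_sub_distrib, mul_sub]
    rw [this]
    simp_rw [key1]
    rw [← Finset.mul_sum, hA_def]
    ring
  have h2 : b - b' = t * (a' - a) * B := by
    have : b - b' = (1 / (K : ℝ)) * ∑ j, (dt j / (1 + t * a * dt j) - dt j / (1 + t * a' * dt j)) := by
      rw [e2, e2', Finset.sum_sub_distrib, mul_sub]
    rw [this]
    simp_rw [key2]
    rw [← Finset.mul_sum, hB_def]
    ring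
  have hA : 0 ≤ A := by
    rw [hA_def]
    have : 0 ≤ ∑ i, (d i)^2 / ((1 + t * b * d i) * (1 + t * b' * d i)) := by
      refine Finset.sum_nonneg fun i _ => div_nonneg (sq_nonneg _) ?_
      exact le_of_lt (mul_pos (fps_denom_pos ht hb.le (hd i)) (fps_denom_pos ht hb'.le (hd i)))
    positivity
  have hB : 0 ≤ B := by
    rw [hB_def]
    have : 0 ≤ ∑ j, (dt j)^2 / ((1 + t * a * dt j) * (1 + t * a' * dt j)) := by
      refine Finset.sum_nonneg fun j _ => div_nonneg (sq_nonneg _) ?_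
      exact le_of_lt (mul_pos (fps_denom_pos ht ha.le (hdt j)) (fps_denom_pos ht ha'.le (hdt j)))
    positivity
  -- key strict bounds: t*A*b < a' and t*B*a' < b
  have hsum1 : ∑ i, t * b * (d i)^2 / ((1 + t * b * d i) * (1 + t * b' * d i))
      < ∑ i, d i / (1 + t * b' * d i) := by
    obtain ⟨i0, hi0⟩ := hd0
    refine Finset.sum_lt_sum (fun i _ => ?_) ⟨i0, Finset.mem_univ _, ?_⟩
    · have hx := fps_denom_pos ht hb.le (hd i)
      have hy := fps_denom_pos ht hb'.le (hd i)
      rw [div_le_div_iff₀ (by positivity) hy]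
      nlinarith [mul_nonneg hy.le (hd i), mul_nonneg (mul_nonneg (mul_nonneg ht.le hb.le) (sq_nonneg (d i))) hy.le]
    · have hx := fps_denom_pos ht hb.le (hd i0)
      have hy := fps_denom_pos ht hb'.le (hd i0)
      rw [div_lt_div_iff₀ (by positivity) hy]
      nlinarith [mul_pos hy hi0]
  have hsum2 : ∑ j, t * a' * (dt j)^2 / ((1 + t * a * dt j) * (1 + t * a' * dt j))
      < ∑ j, dt j / (1 + t * a * dt j) := by
    obtain ⟨j0, hj0⟩ := hdt0
    refine Finset.sum_lt_sum (fun j _ => ?_) ⟨j0, Finset.mem_univ _, ?_⟩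
    · have hx := fps_denom_pos ht ha.le (hdt j)
      have hy := fps_denom_pos ht ha'.le (hdt j)
      rw [div_le_div_iff₀ (by positivity) hx]
      nlinarith [mul_nonneg hx.le (hdt j), mul_nonneg (mul_nonneg (mul_nonneg ht.le ha'.le) (sq_nonneg (dt j))) hx.le]
    · have hx := fps_denom_pos ht ha.le (hdt j0)
      have hy := fps_denom_pos ht ha'.le (hdt j0)
      rw [div_lt_div_iff₀ (by positivity) hx]
      nlinarith [mul_pos hx hj0]
  have hAb : t * A * b < a' := by
    rw [e1', hA_def]
    calc t * ((1 / (K : ℝ)) * ∑ i, (d i)^2 / ((1 + t * b * d i) * (1 + t * b' * d i))) * b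
        = (1 / (K : ℝ)) * ∑ i, t * b * (d i)^2 / ((1 + t * b * d i) * (1 + t * b' * d i)) := by
          simp only [Finset.mul_sum, Finset.sum_mul]
          exact Finset.sum_congr rfl fun i _ => by ring
      _ < (1 / (K : ℝ)) * ∑ i, d i / (1 + t * b' * d i) := by
          exact mul_lt_mul_of_pos_left hsum1 (by positivity)
  have hBa : t * B * a' < b := by
    rw [e2, hB_def]
    calc t * ((1 / (K : ℝ)) * ∑ j, (dt j)^2 / ((1 + t * a * dt j) * (1 + t * a' * dt j))) * a'
        = (1 / (K : ℝ)) * ∑ j, t * a' * (dt j)^2 / ((1 + t * a * dt j) * (1 + t * a' * dt j)) := by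
          simp only [Finset.mul_sum, Finset.sum_mul]
          exact Finset.sum_congr rfl fun i _ => by ring
      _ < (1 / (K : ℝ)) * ∑ j, dt j / (1 + t * a * dt j) := by
          exact mul_lt_mul_of_pos_left hsum2 (by positivity)
  -- t*A * (t*B) < 1
  have hAB : (t * A) * (t * B) < 1 := by
    have hu : 0 ≤ t * A := mul_nonneg ht.le hA
    have hv : 0 ≤ t * B := mul_nonneg ht.le hB
    have hmul : (t * A * b) * (t * B * a') < a' * b :=
      mul_lt_mul'' hAb hBa (mul_nonneg hu hb.le) (mul_nonneg hv ha'.le)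
    have h' : ((t * A) * (t * B)) * (b * a') < 1 * (b * a') := by
      calc ((t * A) * (t * B)) * (b * a') = (t * A * b) * (t * B * a') := by ring
        _ < a' * b := hmul
        _ = 1 * (b * a') := by ring
    exact lt_of_mul_lt_mul_right h' (by positivity)
  have haa : a = a' := by
    have key : a - a' = ((t * A) * (t * B)) * (a - a') := by
      have hb'b : b' - b = t * (a - a') * B := by linarith [h2]
      rw [hb'b] at h1
      linear_combination h1
    have hfac : ((t * A) * (t * B) - 1) * (a - a') = 0 := by linear_combination -key
    rcases mul_eq_zero.mp hfac with h | h
    · linarith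
    · linarith
  refine ⟨haa, ?_⟩
  rw [haa] at h2
  have : b - b' = 0 := by simpa using h2
  linarith


/-- Existence and uniqueness of the solution of the canonical fixed-point system:
for `t > 0`, nonnegative diagonal matrices `D = diag(d)` (`N×N`) and `D̃ = diag(d̃)`
(`K×K`), not identically zero, the system
`δ = (1/K) Tr[D (I + t δ̃ D)⁻¹]`, `δ̃ = (1/K) Tr[D̃ (I + t δ D̃)⁻¹]`
has a unique solution with `δ > 0`, `δ̃ > 0`. -/
theorem fixed_point_system_unique_solution (N K : ℕ) (hK : 0 < K) (t : ℝ) (ht : 0 < t)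
    (d : Fin N → ℝ) (dt : Fin K → ℝ) (hd : ∀ i, 0 ≤ d i) (hdt : ∀ j, 0 ≤ dt j)
    (hd0 : d ≠ 0) (hdt0 : dt ≠ 0) :
    ∃! p : ℝ × ℝ, 0 < p.1 ∧ 0 < p.2 ∧
      p.1 = (1 / (K : ℝ)) * ∑ i, d i / (1 + t * p.2 * d i) ∧
      p.2 = (1 / (K : ℝ)) * ∑ j, dt j / (1 + t * p.1 * dt j) := by
  have hd0' : ∃ i, 0 < d i := by
    obtain ⟨i, hi⟩ := Function.ne_iff.mp hd0
    exact ⟨i, lt_of_le_of_ne (hd i) (by simpa using (Ne.symm hi))⟩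
  have hdt0' : ∃ j, 0 < dt j := by
    obtain ⟨j, hj⟩ := Function.ne_iff.mp hdt0
    exact ⟨j, lt_of_le_of_ne (hdt j) (by simpa using (Ne.symm hj))⟩
  have hKr : (0:ℝ) < (K:ℝ) := by exact_mod_cast hK
  -- the two scalar maps
  set Fd : ℝ → ℝ := fun x => (1 / (K : ℝ)) * ∑ i, d i / (1 + t * x * d i) with hFd
  set Gd : ℝ → ℝ := fun x => (1 / (K : ℝ)) * ∑ j, dt j / (1 + t * x * dt j) with hGd
  set M : ℝ := (1 / (K : ℝ)) * ∑ i, d i with hM_def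
  have hM : 0 < M := by
    obtain ⟨i0, hi0⟩ := hd0'
    have : 0 < ∑ i, d i :=
      Finset.sum_pos' (fun i _ => hd i) ⟨i0, Finset.mem_univ _, hi0⟩
    rw [hM_def]; positivity
  have hFd_pos : ∀ x : ℝ, 0 ≤ x → 0 < Fd x := fun x hx => fps_sum_pos hK ht hd hd0' hx
  have hGd_pos : ∀ x : ℝ, 0 ≤ x → 0 < Gd x := fun x hx => fps_sum_pos hK ht hdt hdt0' hx
  have hFd_le : ∀ x : ℝ, 0 ≤ x → Fd x ≤ M := fun x hx => fps_sum_le ht hd hx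
  -- the composed map and IVT
  set φ : ℝ → ℝ := fun x => x - Fd (Gd x) with hφ
  have hGd_cont : ContinuousOn Gd (Set.Ici 0) := fps_cont ht hdt
  have hFd_cont : ContinuousOn Fd (Set.Ici 0) := fps_cont ht hd
  have hφ_cont : ContinuousOn φ (Set.Icc 0 M) := by
    apply ContinuousOn.sub continuousOn_id
    apply ContinuousOn.comp hFd_cont (hGd_cont.mono (Set.Icc_subset_Ici_self))
    intro x hx
    exact (hGd_pos x hx.1).le
  have hφ0 : φ 0 ≤ 0 := by
    have := hFd_pos (Gd 0) (hGd_pos 0 le_rfl).le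
    simp only [hφ]
    linarith
  have hφM : 0 ≤ φ M := by
    have := hFd_le (Gd M) (hGd_pos M hM.le).le
    simp only [hφ]
    linarith
  have hmem : (0:ℝ) ∈ Set.Icc (φ 0) (φ M) := ⟨hφ0, hφM⟩
  obtain ⟨a, haI, ha0⟩ := intermediate_value_Icc hM.le hφ_cont hmem
  have hfix : a = Fd (Gd a) := by
    have : a - Fd (Gd a) = 0 := ha0
    linarith
  have ha : 0 < a := by
    rw [hfix]
    exact hFd_pos _ (hGd_pos a haI.1).le
  refine ⟨(a, Gd a), ⟨ha, hGd_pos a haI.1, hfix, rfl⟩, ?_⟩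
  rintro ⟨a', b'⟩ ⟨ha', hb', e1', e2'⟩
  have := fps_uniq hK ht hd hdt hd0' hdt0' ha' hb' ha (hGd_pos a haI.1)
    e1' e2' (hfix) rfl
  simp only [Prod.mk.injEq]
  exact this
end

section
/- With t > 0 and δ, δ̃ > 0 the unique solution of the fixed-point system above, define γ = (1/K) Tr[D²(I + tδ̃D)⁻²] and γ̃ = (1/K) Tr[D̃²(I + tδD̃)⁻²]. Then t²γγ̃ < 1. -/
lemma aux_term_le (c x : ℝ) (hc : 0 < c) (hx : 0 ≤ x) :
    x ^ 2 / (1 + c * x) ^ 2 ≤ (1 / c) * (x / (1 + c * x)) := by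
  have h1 : 0 < 1 + c * x := by nlinarith
  rw [div_le_iff₀ (by positivity)]
  have : (1 / c) * (x / (1 + c * x)) * (1 + c * x) ^ 2
      = x * (1 + c * x) / c := by field_simp
  rw [this, le_div_iff₀ hc]
  nlinarith

lemma aux_term_lt (c x : ℝ) (hc : 0 < c) (hx : 0 < x) :
    x ^ 2 / (1 + c * x) ^ 2 < (1 / c) * (x / (1 + c * x)) := by
  have h1 : 0 < 1 + c * x := by nlinarith
  rw [div_lt_iff₀ (by positivity)]
  have : (1 / c) * (x / (1 + c * x)) * (1 + c * x) ^ 2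
      = x * (1 + c * x) / c := by field_simp
  rw [this, lt_div_iff₀ hc]
  nlinarith

lemma aux_sum_lt {n : ℕ} (c : ℝ) (hc : 0 < c) (d : Fin n → ℝ)
    (hd : ∀ i, 0 ≤ d i) (hd0 : d ≠ 0) :
    ∑ i, d i ^ 2 / (1 + c * d i) ^ 2 < (1 / c) * ∑ i, d i / (1 + c * d i) := by
  rw [Finset.mul_sum]
  obtain ⟨i0, hi0⟩ := Function.ne_iff.mp hd0
  exact Finset.sum_lt_sum (fun i _ => aux_term_le c (d i) hc (hd i))
    ⟨i0, Finset.mem_univ i0, aux_term_lt c (d i0) hc ((hd i0).lt_of_ne (Ne.symm hi0))⟩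

/-- With `t > 0` and `(δ, δ̃)` the positive solution of the fixed-point system
`δ = (1/K)Tr[D(I + tδ̃D)⁻¹]`, `δ̃ = (1/K)Tr[D̃(I + tδD̃)⁻¹]`, let
`γ = (1/K)Tr[D²(I + tδ̃D)⁻²]` and `γ̃ = (1/K)Tr[D̃²(I + tδD̃)⁻²]`. Then `t²γγ̃ < 1`. -/
theorem t_sq_gamma_gammat_lt_one (N K : ℕ) (hK : 0 < K) (t : ℝ) (ht : 0 < t)
    (d : Fin N → ℝ) (dt : Fin K → ℝ) (hd : ∀ i, 0 ≤ d i) (hdt : ∀ j, 0 ≤ dt j)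
    (hd0 : d ≠ 0) (hdt0 : dt ≠ 0)
    (δ δt : ℝ) (hδ : 0 < δ) (hδt : 0 < δt)
    (heq1 : δ = (1 / (K : ℝ)) * ∑ i, d i / (1 + t * δt * d i))
    (heq2 : δt = (1 / (K : ℝ)) * ∑ j, dt j / (1 + t * δ * dt j)) :
    t ^ 2 * ((1 / (K : ℝ)) * ∑ i, d i ^ 2 / (1 + t * δt * d i) ^ 2) *
        ((1 / (K : ℝ)) * ∑ j, dt j ^ 2 / (1 + t * δ * dt j) ^ 2) < 1 := by
  have hKpos : (0 : ℝ) < K := by exact_mod_cast hK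
  set γ := (1 / (K : ℝ)) * ∑ i, d i ^ 2 / (1 + t * δt * d i) ^ 2 with hγ
  set γt := (1 / (K : ℝ)) * ∑ j, dt j ^ 2 / (1 + t * δ * dt j) ^ 2 with hγt
  have hc1 : 0 < t * δt := by positivity
  have hc2 : 0 < t * δ := by positivity
  have h1 : γ < δ / (t * δt) := by
    have := aux_sum_lt (t * δt) hc1 d hd hd0
    calc γ < (1 / (K : ℝ)) * ((1 / (t * δt)) * ∑ i, d i / (1 + t * δt * d i)) := by
            rw [hγ]
            exact mul_lt_mul_of_pos_left this (by positivity)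
      _ = δ / (t * δt) := by rw [heq1]; field_simp
  have h2 : γt < δt / (t * δ) := by
    have := aux_sum_lt (t * δ) hc2 dt hdt hdt0
    calc γt < (1 / (K : ℝ)) * ((1 / (t * δ)) * ∑ j, dt j / (1 + t * δ * dt j)) := by
            rw [hγt]
            exact mul_lt_mul_of_pos_left this (by positivity)
      _ = δt / (t * δ) := by rw [heq2]; field_simp
  have hγ0 : 0 ≤ γ := by
    rw [hγ]
    have : ∀ i ∈ Finset.univ, (0:ℝ) ≤ d i ^ 2 / (1 + t * δt * d i) ^ 2 :=
      fun i _ => by positivity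
    positivity
  have hγt0 : 0 ≤ γt := by
    rw [hγt]
    have : ∀ j ∈ Finset.univ, (0:ℝ) ≤ dt j ^ 2 / (1 + t * δ * dt j) ^ 2 :=
      fun j _ => by positivity
    positivity
  have key : γ * γt < (δ / (t * δt)) * (δt / (t * δ)) :=
    mul_lt_mul'' h1 h2 hγ0 hγt0
  have hone : (δ / (t * δt)) * (δt / (t * δ)) = 1 / t ^ 2 := by
    field_simp
  calc t ^ 2 * γ * γt = t ^ 2 * (γ * γt) := by ring
    _ < t ^ 2 * (1 / t ^ 2) := by rw [← hone]; exact mul_lt_mul_of_pos_left key (by positivity)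
    _ = 1 := by field_simp
end
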